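/- Let H^i_k ∈ ℂ (i ≥ 1, k ≥ 0) and let p_i = z^i + H^i_0 + ∑_{k≥1} H^i_k z^{−k} be the Σ₁ family. Suppose the family {p_i}_{i≥1} is multiplicatively closed and z² p_i lies in the ℂ-linear span of the family for every i ≥ 1. Then in ℂ((z⁻¹)): p₂ = p₁² − 2H¹₀ p₁ and p₃ = p₁³ − 3H¹₀ p₁² − (3H¹₁ − 3(H¹₀)²) p₁; equivalently, in the shifted variables p̃_k = p_k − H^k_0 one has z² = (p₁ − H¹₀)² − 2H¹₁ and p₃ − H³₀ = (p₁ − H¹₀)³ − 3H¹₁ (p₁ − H¹₀), i.e. the Σ₁ family satisfies the big-cell (twisted cubic) relations after the shift p̃_k = p_k − H^k_0. -/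

import Mathlib

noncomputable section

/-- `z^j` viewed as a formal Laurent series in `t = z⁻¹` (so `z^j = t^(-j)`). -/
def zp (j : ℤ) : LaurentSeries ℂ := HahnSeries.single (-j) 1

/-- The `Σ₁` family `p_i = z^i + H^i_0 + ∑_{k ≥ 1} H^i_k z^(-k)`, `i ≥ 1`. -/
def sigma1 (H : ℕ → ℕ → ℂ) (i : ℕ) : LaurentSeries ℂ :=
  zp i + HahnSeries.ofPowerSeries ℤ ℂ (PowerSeries.mk fun k => H i k)

def fs (H : ℕ → ℕ → ℂ) (i : ℕ) : LaurentSeries ℂ :=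
  HahnSeries.ofPowerSeries ℤ ℂ (PowerSeries.mk fun k => H i k)

lemma sigma1_eq (H : ℕ → ℕ → ℂ) (i : ℕ) :
    sigma1 H i = HahnSeries.single (-(i:ℤ)) 1 + fs H i := rfl

lemma fs_coeff_nat (H : ℕ → ℕ → ℂ) (i n : ℕ) : (fs H i).coeff (n : ℤ) = H i n := by
  rw [fs]
  rw [HahnSeries.ofPowerSeries_apply_coeff]
  simp

lemma fs_coeff_neg (H : ℕ → ℕ → ℂ) (i : ℕ) {g : ℤ} (hg : g < 0) : (fs H i).coeff g = 0 := by
  rw [fs, HahnSeries.ofPowerSeries_apply]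
  apply HahnSeries.embDomain_notin_range
  rintro ⟨n, hn⟩
  have h2 : (n : ℤ) = g := hn
  omega

def lcoeff (g : ℤ) : LaurentSeries ℂ →ₗ[ℂ] ℂ where
  toFun x := x.coeff g
  map_add' _ _ := HahnSeries.coeff_add
  map_smul' _ _ := HahnSeries.coeff_smul

lemma single_one_mul_coeff (x : LaurentSeries ℂ) (a g : ℤ) :
    (HahnSeries.single a (1:ℂ) * x).coeff g = x.coeff (g - a) := by
  have := HahnSeries.coeff_single_mul_add (r := (1:ℂ)) (x := x) (a := g - a) (b := a)
  simpa using this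

lemma sigma1_coeff_neg (H : ℕ → ℕ → ℂ) (i j : ℕ) (hj : 1 ≤ j) :
    (sigma1 H i).coeff (-(j:ℤ)) = if i = j then 1 else 0 := by
  rw [sigma1_eq, HahnSeries.coeff_add, fs_coeff_neg H i (by omega : (-(j:ℤ)) < 0),
    HahnSeries.coeff_single]
  have : (-(j:ℤ) = -(i:ℤ)) ↔ (i = j) := by omega
  simp [this]

lemma sigma1_coeff_nat (H : ℕ → ℕ → ℂ) (i : ℕ) (hi : 1 ≤ i) (n : ℕ) :
    (sigma1 H i).coeff (n : ℤ) = H i n := by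
  rw [sigma1_eq, HahnSeries.coeff_add, fs_coeff_nat, HahnSeries.coeff_single_of_ne (by omega)]
  ring

lemma span_rep (H : ℕ → ℕ → ℂ) (v : LaurentSeries ℂ)
    (hv : v ∈ Submodule.span ℂ (sigma1 H '' {i | 1 ≤ i}))
    (hb : ∀ j : ℕ, 4 ≤ j → v.coeff (-(j:ℤ)) = 0) :
    v = v.coeff (-1) • sigma1 H 1 + v.coeff (-2) • sigma1 H 2 + v.coeff (-3) • sigma1 H 3 := by
  rw [Finsupp.mem_span_image_iff_linearCombination] at hv
  obtain ⟨l, hls, hlv⟩ := hv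
  rw [Finsupp.mem_supported] at hls
  have key : ∀ j : ℕ, 1 ≤ j → l j = v.coeff (-(j:ℤ)) := by
    intro j hj
    have h1 := congrArg (lcoeff (-(j:ℤ))) hlv
    rw [Finsupp.linearCombination_apply, map_finsuppSum] at h1
    have h2 : (l.sum fun i c => lcoeff (-(j:ℤ)) (c • sigma1 H i)) = l j := by
      rw [Finsupp.sum]
      have hstep : ∀ i ∈ l.support,
          lcoeff (-(j:ℤ)) (l i • sigma1 H i) = if i = j then l i else 0 := by
        intro i hi
        have hi1 : 1 ≤ i := hls hi
        simp only [lcoeff, LinearMap.coe_mk, AddHom.coe_mk, HahnSeries.coeff_smul,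
          sigma1_coeff_neg H i j hj, smul_eq_mul]
        split <;> simp
      rw [Finset.sum_congr rfl hstep, Finset.sum_ite_eq' l.support j l]
      split
      · rfl
      · exact (Finsupp.notMem_support_iff.mp (by assumption)).symm
    rw [h2] at h1
    exact h1
  have hsupp : l.support ⊆ ({1, 2, 3} : Finset ℕ) := by
    intro i hi
    have hi1 : 1 ≤ i := hls hi
    have : l i ≠ 0 := Finsupp.mem_support_iff.mp hi
    by_contra hmem
    simp only [Finset.mem_insert, Finset.mem_singleton] at hmem
    push_neg at hmem
    have h4 : 4 ≤ i := by omega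
    exact this (by rw [key i hi1]; exact hb i h4)
  have hv2 : v = l 1 • sigma1 H 1 + l 2 • sigma1 H 2 + l 3 • sigma1 H 3 := by
    rw [← hlv, Finsupp.linearCombination_apply, Finsupp.sum]
    rw [Finset.sum_subset hsupp (fun x _ hx => by
      rw [Finsupp.notMem_support_iff.mp hx, zero_smul])]
    rw [Finset.sum_insert (by decide), Finset.sum_insert (by decide), Finset.sum_singleton,
      add_assoc]
  rw [key 1 (by norm_num), key 2 (by norm_num), key 3 (by norm_num)] at hv2
  norm_num at hv2
  norm_num
  exact hv2

lemma ofPS_coeff_neg (x : PowerSeries ℂ) {g : ℤ} (hg : g < 0) :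
    (HahnSeries.ofPowerSeries ℤ ℂ x).coeff g = 0 := by
  rw [HahnSeries.ofPowerSeries_apply]
  apply HahnSeries.embDomain_notin_range
  rintro ⟨n, hn⟩
  have h2 : (n : ℤ) = g := hn
  omega

lemma fs_coeff_int (H : ℕ → ℕ → ℂ) (i : ℕ) (g : ℤ) :
    (fs H i).coeff g = if 0 ≤ g then H i g.toNat else 0 := by
  split
  · rename_i h
    rw [show g = ((g.toNat : ℕ) : ℤ) by omega, fs_coeff_nat]
    congr 1
  · exact fs_coeff_neg H i (by omega)

lemma fs_mul_coeff_neg (H : ℕ → ℕ → ℂ) (i j : ℕ) {g : ℤ} (hg : g < 0) :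
    (fs H i * fs H j).coeff g = 0 := by
  rw [fs, fs, ← map_mul]
  exact ofPS_coeff_neg _ hg

lemma fs_mul_coeff_zero (H : ℕ → ℕ → ℂ) (i j : ℕ) :
    (fs H i * fs H j).coeff (0 : ℤ) = H i 0 * H j 0 := by
  rw [fs, fs, ← map_mul, show ((0:ℤ)) = ((0:ℕ):ℤ) by norm_num,
    HahnSeries.ofPowerSeries_apply_coeff]
  simp [PowerSeries.coeff_mul]

lemma fs_mul_coeff_one (H : ℕ → ℕ → ℂ) (i j : ℕ) :
    (fs H i * fs H j).coeff (1 : ℤ) = H i 0 * H j 1 + H i 1 * H j 0 := by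
  rw [fs, fs, ← map_mul, show ((1:ℤ)) = ((1:ℕ):ℤ) by norm_num,
    HahnSeries.ofPowerSeries_apply_coeff]
  rw [PowerSeries.coeff_mul]
  rw [Finset.Nat.antidiagonal_succ]
  simp [Prod.map]

lemma sigma1_mul_coeff (H : ℕ → ℕ → ℂ) (i j : ℕ) (g : ℤ) :
    (sigma1 H i * sigma1 H j).coeff g =
      (if g = -(i:ℤ) - j then 1 else 0) + (fs H j).coeff (g + i) + (fs H i).coeff (g + j)
        + (fs H i * fs H j).coeff g := by
  rw [sigma1_eq H i, sigma1_eq H j, add_mul, mul_add, mul_add, HahnSeries.single_mul_single,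
    mul_comm (fs H i) (HahnSeries.single (-(j:ℤ)) 1)]
  rw [HahnSeries.coeff_add, HahnSeries.coeff_add, HahnSeries.coeff_add,
    single_one_mul_coeff, single_one_mul_coeff, HahnSeries.coeff_single]
  rw [show g - -(i:ℤ) = g + i by ring, show g - -(j:ℤ) = g + j by ring,
    show (-(i:ℤ) + -(j:ℤ)) = (-(i:ℤ) - j) by ring]
  ring

lemma zp2_mul_coeff (x : LaurentSeries ℂ) (g : ℤ) :
    (zp 2 * x).coeff g = x.coeff (g + 2) := by
  rw [zp, single_one_mul_coeff]
  norm_num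

lemma sigma1_coeff_int (H : ℕ → ℕ → ℂ) (i : ℕ) (g : ℤ) :
    (sigma1 H i).coeff g =
      (if g = -(i:ℤ) then 1 else 0) + (if 0 ≤ g then H i g.toNat else 0) := by
  rw [sigma1_eq, HahnSeries.coeff_add, HahnSeries.coeff_single, fs_coeff_int]
  norm_num

/-- The `Σ₁` family satisfies the big-cell (twisted cubic) relations after the shift
`p̃_k = p_k - H^k_0`. -/
theorem sigma1_twisted_cubic (H : ℕ → ℕ → ℂ)
    (hmul : ∀ i j : ℕ, 1 ≤ i → 1 ≤ j →
      sigma1 H i * sigma1 H j ∈ Submodule.span ℂ (sigma1 H '' {i | 1 ≤ i}))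
    (hz2 : ∀ i : ℕ, 1 ≤ i →
      zp 2 * sigma1 H i ∈ Submodule.span ℂ (sigma1 H '' {i | 1 ≤ i})) :
    (sigma1 H 2 = sigma1 H 1 ^ 2 - (2 * H 1 0) • sigma1 H 1) ∧
    (sigma1 H 3 = sigma1 H 1 ^ 3 - (3 * H 1 0) • sigma1 H 1 ^ 2
        - (3 * H 1 1 - 3 * (H 1 0)^2) • sigma1 H 1) ∧
    (zp 2 = (sigma1 H 1 - HahnSeries.C (H 1 0)) ^ 2 - HahnSeries.C (2 * H 1 1)) ∧
    (sigma1 H 3 - HahnSeries.C (H 3 0)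
      = (sigma1 H 1 - HahnSeries.C (H 1 0)) ^ 3
        - (3 * H 1 1) • (sigma1 H 1 - HahnSeries.C (H 1 0))) := by
  have hp1ne : sigma1 H 1 ≠ 0 := by
    intro h
    have h2 := sigma1_coeff_neg H 1 1 le_rfl
    rw [h] at h2
    simp at h2
  -- relation A : p1 * p1
  have hA := span_rep H _ (hmul 1 1 le_rfl le_rfl) (fun j hj => by
    rw [sigma1_mul_coeff, fs_mul_coeff_neg H 1 1 (by omega : -(j:ℤ) < 0),
      fs_coeff_int]
    push_cast
    rw [if_neg (by omega), if_neg (by omega)]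
    ring)
  rw [show (sigma1 H 1 * sigma1 H 1).coeff (-1) = 2 * H 1 0 by
      rw [sigma1_mul_coeff, fs_mul_coeff_neg H 1 1 (by norm_num : (-1:ℤ) < 0),
        fs_coeff_int]
      push_cast
      norm_num
      try ring,
    show (sigma1 H 1 * sigma1 H 1).coeff (-2) = 1 by
      rw [sigma1_mul_coeff, fs_mul_coeff_neg H 1 1 (by norm_num : (-2:ℤ) < 0),
        fs_coeff_int]
      push_cast
      norm_num
      try ring,
    show (sigma1 H 1 * sigma1 H 1).coeff (-3) = 0 by
      rw [sigma1_mul_coeff, fs_mul_coeff_neg H 1 1 (by norm_num : (-3:ℤ) < 0),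
        fs_coeff_int]
      push_cast
      norm_num
      try ring] at hA
  simp only [one_smul, zero_smul, add_zero] at hA
  -- relation B : zp 2 * p1
  have hB := span_rep H _ (hz2 1 le_rfl) (fun j hj => by
    rw [zp2_mul_coeff, sigma1_coeff_int]
    push_cast
    rw [if_neg (by omega), if_neg (by omega)]
    ring)
  rw [show (zp 2 * sigma1 H 1).coeff (-1) = H 1 1 by
      rw [zp2_mul_coeff, sigma1_coeff_int]
      push_cast
      norm_num,
    show (zp 2 * sigma1 H 1).coeff (-2) = H 1 0 by
      rw [zp2_mul_coeff, sigma1_coeff_int]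
      push_cast
      norm_num,
    show (zp 2 * sigma1 H 1).coeff (-3) = 1 by
      rw [zp2_mul_coeff, sigma1_coeff_int]
      push_cast
      norm_num] at hB
  simp only [one_smul] at hB
  -- relation C : p1 * p2
  have hC := span_rep H _ (hmul 1 2 le_rfl (by norm_num)) (fun j hj => by
    rw [sigma1_mul_coeff, fs_mul_coeff_neg H 1 2 (by omega : -(j:ℤ) < 0),
      fs_coeff_int, fs_coeff_int]
    push_cast
    rw [if_neg (by omega), if_neg (by omega), if_neg (by omega)]
    ring)
  rw [show (sigma1 H 1 * sigma1 H 2).coeff (-1) = H 2 0 + H 1 1 by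
      rw [sigma1_mul_coeff, fs_mul_coeff_neg H 1 2 (by norm_num : (-1:ℤ) < 0),
        fs_coeff_int, fs_coeff_int]
      push_cast
      norm_num,
    show (sigma1 H 1 * sigma1 H 2).coeff (-2) = H 1 0 by
      rw [sigma1_mul_coeff, fs_mul_coeff_neg H 1 2 (by norm_num : (-2:ℤ) < 0),
        fs_coeff_int, fs_coeff_int]
      push_cast
      norm_num,
    show (sigma1 H 1 * sigma1 H 2).coeff (-3) = 1 by
      rw [sigma1_mul_coeff, fs_mul_coeff_neg H 1 2 (by norm_num : (-3:ℤ) < 0),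
        fs_coeff_int, fs_coeff_int]
      push_cast
      norm_num] at hC
  simp only [one_smul] at hC
  -- coefficient extraction (smul form)
  have hA0 := congrArg (fun x : LaurentSeries ℂ => x.coeff 0) hA
  simp only [HahnSeries.coeff_add, HahnSeries.coeff_smul, smul_eq_mul, sigma1_mul_coeff,
    fs_mul_coeff_zero, fs_coeff_int, sigma1_coeff_int] at hA0
  norm_num at hA0
  have hA1 := congrArg (fun x : LaurentSeries ℂ => x.coeff 1) hA
  simp only [HahnSeries.coeff_add, HahnSeries.coeff_smul, smul_eq_mul, sigma1_mul_coeff,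
    fs_mul_coeff_one, fs_coeff_int, sigma1_coeff_int] at hA1
  norm_num at hA1
  have hB0 := congrArg (fun x : LaurentSeries ℂ => x.coeff 0) hB
  simp only [HahnSeries.coeff_add, HahnSeries.coeff_smul, smul_eq_mul, zp2_mul_coeff,
    sigma1_coeff_int] at hB0
  norm_num at hB0
  -- convert smul to C-multiplication
  simp only [← HahnSeries.C_mul_eq_smul, map_add, map_mul, map_sub, map_pow, map_ofNat, map_zero, map_one] at hA hB hC
  -- cancellation: p2 = zp 2 + C (H 2 0)
  have hE0 : sigma1 H 1 * (sigma1 H 2 - zp 2 - HahnSeries.C (H 2 0)) = 0 := by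
    linear_combination hC - hB
  have hE : sigma1 H 2 = zp 2 + HahnSeries.C (H 2 0) := by
    have h := (mul_eq_zero.mp hE0).resolve_left hp1ne
    linear_combination h
  -- scalar identities
  simp only [show ((2:ℤ)).toNat = 2 from rfl] at hA1 hB0
  have h21 : H 2 1 = 0 := by
    have h := congrArg (fun x : LaurentSeries ℂ => x.coeff 1) hE
    simp only [sigma1_coeff_int, HahnSeries.coeff_add, zp, HahnSeries.C_apply,
      HahnSeries.coeff_single] at h
    norm_num at h
    exact h
  rw [h21] at hA1
  -- scalar identities
  have s1 : H 2 0 = 2 * H 1 1 - H 1 0 ^ 2 := by linear_combination -hA0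
  have s2 : H 1 2 = 0 := by linear_combination hA1 / 2
  have s3 : H 3 0 = H 1 0 ^ 3 - 3 * H 1 0 * H 1 1 := by
    linear_combination -hB0 + s2 - H 1 0 * s1
  have cs1 := congrArg (HahnSeries.C (R := ℂ) (Γ := ℤ)) s1
  have cs3 := congrArg (HahnSeries.C (R := ℂ) (Γ := ℤ)) s3
  simp only [map_sub, map_add, map_mul, map_pow, map_ofNat] at cs1 cs3
  -- final algebra
  simp only [← HahnSeries.C_mul_eq_smul, map_add, map_mul, map_sub, map_pow, map_ofNat]
  refine ⟨by linear_combination -hA, ?_, ?_, ?_⟩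
  · linear_combination (HahnSeries.C (H 1 0) - sigma1 H 1) * hA - sigma1 H 1 * cs1
      - sigma1 H 1 * hE - hB
  · linear_combination -hA - hE - cs1
  · linear_combination (HahnSeries.C (H 1 0) - sigma1 H 1) * hA - sigma1 H 1 * cs1
      - sigma1 H 1 * hE - hB - cs3

end
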